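/- Fix n ≥ 1 and a finite group G. The assignment π(σ_i)((g₁,h₁),...,(g_n,h_n)) = ((g₁,h₁),...,(g_{i-1},h_{i-1}), (g_i h_i g_i⁻¹ g_{i+1}, h_{i+1}), (g_i,h_i), (g_{i+2},h_{i+2}),...,(g_n,h_n)) on elementary braid generators extends to a well-defined group action of the braid group B_n on the finite set G^{2n}; i.e., the defined permutations satisfy the braid relations π(σ_i)π(σ_{i+1})π(σ_i) = π(σ_{i+1})π(σ_i)π(σ_{i+1}) and π(σ_i)π(σ_j) = π(σ_j)π(σ_i) for |i−j| > 1. -/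

import Mathlib

/-- The map on `G^{2n} = (G × G)^n` given by the elementary braid `σ_{i+1}`:
`(..., (gᵢ,hᵢ), (gᵢ₊₁,hᵢ₊₁), ...) ↦ (..., (gᵢhᵢgᵢ⁻¹gᵢ₊₁, hᵢ₊₁), (gᵢ,hᵢ), ...)`
(positions are 0-indexed: it modifies positions `i` and `i+1`). -/
def braidMap {G : Type*} [Group G] {n : ℕ} (i : ℕ) (h : i + 1 < n)
    (x : Fin n → G × G) : Fin n → G × G := fun j =>
  if (j : ℕ) = i then
    ((x ⟨i, by omega⟩).1 * (x ⟨i, by omega⟩).2 * (x ⟨i, by omega⟩).1⁻¹ *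
        (x ⟨i + 1, h⟩).1,
      (x ⟨i + 1, h⟩).2)
  else if (j : ℕ) = i + 1 then x ⟨i, by omega⟩
  else x j

/-- Explicit inverse of `braidMap`. -/
def braidMapInv {G : Type*} [Group G] {n : ℕ} (i : ℕ) (h : i + 1 < n)
    (y : Fin n → G × G) : Fin n → G × G := fun j =>
  if (j : ℕ) = i then y ⟨i + 1, h⟩
  else if (j : ℕ) = i + 1 then
    (((y ⟨i + 1, h⟩).1 * (y ⟨i + 1, h⟩).2 * (y ⟨i + 1, h⟩).1⁻¹)⁻¹ * (y ⟨i, by omega⟩).1,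
      (y ⟨i, by omega⟩).2)
  else y j

lemma braidMap_leftInv {G : Type*} [Group G] {n : ℕ} (i : ℕ) (h : i + 1 < n) :
    Function.LeftInverse (braidMapInv (G := G) (n := n) i h) (braidMap i h) := by
  intro x
  funext j
  by_cases h1 : (j : ℕ) = i
  · have : j = ⟨i, by omega⟩ := Fin.ext h1
    rw [this]
    simp [braidMap, braidMapInv]
  · by_cases h2 : (j : ℕ) = i + 1
    · have : j = ⟨i + 1, by omega⟩ := Fin.ext h2
      rw [this]
      simp [braidMap, braidMapInv]
      ext <;> simp [mul_assoc]
    · simp [braidMap, braidMapInv, h1, h2]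

lemma braidMap_rightInv {G : Type*} [Group G] {n : ℕ} (i : ℕ) (h : i + 1 < n) :
    Function.RightInverse (braidMapInv (G := G) (n := n) i h) (braidMap i h) := by
  intro x
  funext j
  by_cases h1 : (j : ℕ) = i
  · have : j = ⟨i, by omega⟩ := Fin.ext h1
    rw [this]
    simp [braidMap, braidMapInv]
    ext <;> simp [mul_assoc]
  · by_cases h2 : (j : ℕ) = i + 1
    · have : j = ⟨i + 1, by omega⟩ := Fin.ext h2
      rw [this]
      simp [braidMap, braidMapInv]
    · simp [braidMap, braidMapInv, h1, h2]

/-- The maps `π(σ_i)` on `G^{2n}` are bijections and satisfy the braid relations, hence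
define an action of the braid group `B_n` on the finite set `G^{2n}`. -/
theorem braidMap_braid_relations {G : Type*} [Group G] [Finite G] (n : ℕ) :
    (∀ (i : ℕ) (h : i + 1 < n),
      Function.Bijective (braidMap (G := G) (n := n) i h)) ∧
    (∀ (i : ℕ) (h1 : i + 1 < n) (h2 : i + 2 < n),
      braidMap (G := G) i h1 ∘ braidMap (i + 1) (by omega) ∘ braidMap i h1 =
        braidMap (i + 1) (by omega) ∘ braidMap i h1 ∘ braidMap (i + 1) (by omega)) ∧
    (∀ (i j : ℕ) (hi : i + 1 < n) (hj : j + 1 < n), i + 1 < j →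
      braidMap (G := G) i hi ∘ braidMap j hj = braidMap j hj ∘ braidMap i hi) := by
  refine ⟨fun i h => ?_, fun i h1 h2 => ?_, fun i j hi hj hij => ?_⟩
  · exact Function.bijective_iff_has_inverse.mpr
      ⟨braidMapInv i h, braidMap_leftInv i h, braidMap_rightInv i h⟩
  · funext x j
    have n1 : ¬ (i = i + 1) := by omega
    have n2 : ¬ (i + 1 = i) := by omega
    have n3 : ¬ (i = i + 1 + 1) := by omega
    have n4 : ¬ (i + 1 + 1 = i) := by omega
    have n5 : ¬ (i + 1 = i + 1 + 1) := by omega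
    have n6 : ¬ (i + 1 + 1 = i + 1) := by omega
    by_cases e1 : (j : ℕ) = i
    · rw [show j = ⟨i, by omega⟩ from Fin.ext e1]
      simp only [Function.comp_apply, braidMap, Fin.val_mk, if_neg n1, if_neg n2,
        if_neg n3, if_neg n4, if_neg n5, if_neg n6, eq_self_iff_true, if_true]
      ext <;> simp [mul_assoc]
    · by_cases e2 : (j : ℕ) = i + 1
      · rw [show j = ⟨i + 1, by omega⟩ from Fin.ext e2]
        simp only [Function.comp_apply, braidMap, Fin.val_mk, if_neg n1, if_neg n2,
          if_neg n3, if_neg n4, if_neg n5, if_neg n6, eq_self_iff_true, if_true]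
      · by_cases e3 : (j : ℕ) = i + 2
        · rw [show j = ⟨i + 2, by omega⟩ from Fin.ext e3]
          simp only [Function.comp_apply, braidMap, Fin.val_mk, if_neg n1, if_neg n2,
            if_neg n3, if_neg n4, if_neg n5, if_neg n6, eq_self_iff_true, if_true]
        · have m1 : ¬ (j : ℕ) = i + 1 + 1 := by omega
          have m2 : ¬ (j : ℕ) = i + 1 := e2
          simp only [Function.comp_apply, braidMap, if_neg e1, if_neg m1, if_neg m2]
  · funext x k
    by_cases e1 : (k : ℕ) = i
    · rw [show k = ⟨i, by omega⟩ from Fin.ext e1]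
      simp only [Function.comp_apply, braidMap, Fin.val_mk]
      have a1 : ¬ (i = j) := by omega
      have a2 : ¬ (i = j + 1) := by omega
      have a3 : ¬ (i + 1 = j) := by omega
      have a4 : ¬ (i + 1 = j + 1) := by omega
      simp [a1, a2, a3, a4]
    · by_cases e2 : (k : ℕ) = i + 1
      · rw [show k = ⟨i + 1, by omega⟩ from Fin.ext e2]
        simp only [Function.comp_apply, braidMap, Fin.val_mk]
        have a1 : ¬ (i = j) := by omega
        have a2 : ¬ (i = j + 1) := by omega
        have a3 : ¬ (i + 1 = j) := by omega
        have a4 : ¬ (i + 1 = j + 1) := by omega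
        simp [a1, a2, a3, a4]
      · by_cases e3 : (k : ℕ) = j
        · rw [show k = ⟨j, by omega⟩ from Fin.ext e3]
          simp only [Function.comp_apply, braidMap, Fin.val_mk]
          have a1 : ¬ (j = i) := by omega
          have a2 : ¬ (j = i + 1) := by omega
          have a3 : ¬ (j + 1 = i) := by omega
          have a4 : ¬ (j + 1 = i + 1) := by omega
          simp [a1, a2, a3, a4]
        · by_cases e4 : (k : ℕ) = j + 1
          · rw [show k = ⟨j + 1, by omega⟩ from Fin.ext e4]
            simp only [Function.comp_apply, braidMap, Fin.val_mk]
            have a1 : ¬ (j = i) := by omega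
            have a2 : ¬ (j = i + 1) := by omega
            have a3 : ¬ (j + 1 = i) := by omega
            have a4 : ¬ (j + 1 = i + 1) := by omega
            simp [a1, a2, a3, a4]
          · simp [Function.comp_apply, braidMap, e1, e2, e3, e4]
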